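/- Let r ≥ 1, u ≥ 1 and let A = (M^{2^r} + M^{2^r - 1} + ⋯ + M + 1)^{2^u} = (Σ_{i=0}^{2^r} M^i)^{2^u} in F_2[x]. Then the length ℓ_A equals 2^u·(2^r - 1) + 1. -/
import Mathlib


open Polynomial Finset

/-- The polynomial `M = x^2 + x + 1` over `F_2`. -/
noncomputable def M : Polynomial (ZMod 2) := X ^ 2 + X + 1

/-- The odd part of a binary polynomial: `P` divided by `x^{val_x(P)} (x+1)^{val_{x+1}(P)}`. -/
noncomputable def oddPart (P : Polynomial (ZMod 2)) : Polynomial (ZMod 2) :=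
  P / (X ^ P.rootMultiplicity 0 * (X + 1) ^ P.rootMultiplicity 1)

/-- The Collatz sequence of a binary polynomial `A`:
`A_0 = A`, `A_{2k+1} = oddPart A_{2k}`, `A_{2k+2} = 1 + M * A_{2k+1}`. -/
noncomputable def collatz (A : Polynomial (ZMod 2)) : ℕ → Polynomial (ZMod 2)
  | 0 => A
  | n + 1 => if n % 2 = 0 then oddPart (collatz A n) else 1 + M * collatz A n

/-- `a_k`: the multiplicity of `x` in `A_k`. -/
noncomputable def aSeq (A : Polynomial (ZMod 2)) (k : ℕ) : ℕ :=
  (collatz A k).rootMultiplicity 0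

/-- `b_k`: the multiplicity of `x + 1` in `A_k`. -/
noncomputable def bSeq (A : Polynomial (ZMod 2)) (k : ℕ) : ℕ :=
  (collatz A k).rootMultiplicity 1

/-- The length `ℓ_A = m + 1`, where `m` is the least nonnegative integer
with `A_{2m+1} = 1`. -/
noncomputable def collatzLength (A : Polynomial (ZMod 2)) : ℕ :=
  sInf {m : ℕ | collatz A (2 * m + 1) = 1} + 1

lemma collatz_succ (A : Polynomial (ZMod 2)) (n : ℕ) :
    collatz A (n+1) = if n % 2 = 0 then oddPart (collatz A n) else 1 + M * collatz A n := rfl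

lemma eval_M_zero : (M).eval (0 : ZMod 2) = 1 := by simp [M]
lemma eval_M_one : (M).eval (1 : ZMod 2) = 1 := by simp [M]; decide

lemma two_eq_zero' : (2 : Polynomial (ZMod 2)) = 0 := by
  have := CharP.cast_eq_zero (Polynomial (ZMod 2)) 2
  exact_mod_cast this

lemma M_add_one : M + 1 = (X : Polynomial (ZMod 2)) * (X + 1) := by
  simp only [M]; linear_combination two_eq_zero'

lemma X_add_one_ne : (X + 1 : Polynomial (ZMod 2)) ≠ 0 := by
  intro h
  have := congrArg (eval 0) h
  simp at this

lemma M_ne : (M : Polynomial (ZMod 2)) ≠ 0 := by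
  intro h; have := congrArg (eval 0) h; rw [eval_M_zero] at this; simp at this

lemma M_add_one_ne : (M + 1 : Polynomial (ZMod 2)) ≠ 0 := by
  rw [M_add_one]; exact mul_ne_zero X_ne_zero X_add_one_ne

lemma eval_Q (z : ZMod 2) (hz : M.eval z = 1) (a e : ℕ) (he : 1 ≤ e) :
    (1 + M ^ a * (M + 1) ^ e).eval z = 1 := by
  have h0 : (M + 1).eval z = 0 := by
    rw [eval_add, hz, eval_one]; decide
  simp [eval_add, eval_mul, eval_pow, h0, zero_pow (by omega : e ≠ 0)]

lemma oddPart_shape (c : ℕ) (Q : Polynomial (ZMod 2)) (h0 : Q.eval 0 = 1) (h1 : Q.eval 1 = 1) :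
    oddPart ((X * (X + 1)) ^ c * Q) = Q := by
  have hQ : Q ≠ 0 := by intro h; rw [h] at h0; simp at h0
  set P := (X * (X+1))^c * Q with hP
  have hPe : P = X ^ c * ((X+1) ^ c * Q) := by rw [hP, mul_pow, mul_assoc]
  have hne : (X : Polynomial (ZMod 2)) ^ c * (X+1) ^ c ≠ 0 :=
    mul_ne_zero (pow_ne_zero _ X_ne_zero) (pow_ne_zero _ X_add_one_ne)
  have hPne : P ≠ 0 := by
    rw [hPe, ← mul_assoc]; exact mul_ne_zero hne hQ
  have rmX : ∀ z : ZMod 2, rootMultiplicity z ((X - C z) ^ c) = c :=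
    fun z => rootMultiplicity_X_sub_C_pow z c
  have rm0 : P.rootMultiplicity 0 = c := by
    rw [hPe, rootMultiplicity_mul (by rw [← hPe]; exact hPne)]
    have h1' : rootMultiplicity (0 : ZMod 2) ((X+1)^c * Q) = 0 := by
      apply rootMultiplicity_eq_zero
      simp [IsRoot, h0]
    have h2' : rootMultiplicity (0 : ZMod 2) ((X : Polynomial (ZMod 2))^c) = c := by
      have := rmX 0; simpa using this
    rw [h1', h2', add_zero]
  have hX1 : (X + 1 : Polynomial (ZMod 2)) = X - C 1 := by
    rw [C_1, CharTwo.sub_eq_add]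
  have rm1 : P.rootMultiplicity 1 = c := by
    have hPe2 : P = (X+1) ^ c * (X ^ c * Q) := by rw [hP, mul_pow]; ring
    rw [hPe2, rootMultiplicity_mul (by rw [← hPe2]; exact hPne)]
    have h1' : rootMultiplicity (1 : ZMod 2) ((X : Polynomial (ZMod 2))^c * Q) = 0 := by
      apply rootMultiplicity_eq_zero
      simp [IsRoot, h1]
    have h2' : rootMultiplicity (1 : ZMod 2) ((X + 1 : Polynomial (ZMod 2))^c) = c := by
      rw [hX1]; exact rmX 1
    rw [h1', h2', add_zero]
  rw [oddPart, rm0, rm1, show P = (X ^ c * (X+1) ^ c) * Q from by rw [hPe]; ring]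
  exact (EuclideanDomain.eq_div_of_mul_eq_right hne rfl).symm

lemma collatz_two_step (A : Polynomial (ZMod 2)) (k a e : ℕ) (he : 1 ≤ e)
    (h : collatz A (2*k+1) = 1 + M ^ a * (M + 1) ^ (e+1)) :
    collatz A (2*(k+1)+1) = 1 + M ^ (a+1) * (M + 1) ^ e := by
  have h2 : collatz A (2*k+2) = 1 + M * collatz A (2*k+1) := by
    rw [show 2*k+2 = (2*k+1)+1 from rfl, collatz_succ,
      if_neg (by omega : ¬ (2*k+1) % 2 = 0)]
  have h3 : collatz A (2*(k+1)+1) = oddPart (collatz A (2*k+2)) := by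
    rw [show 2*(k+1)+1 = (2*k+2)+1 by ring, collatz_succ,
      if_pos (by omega : (2*k+2) % 2 = 0)]
  have hiden : 1 + M * (1 + M ^ a * (M+1)^(e+1)) =
      (X*(X+1))^1 * (1 + M ^ (a+1) * (M+1)^e) := by
    rw [pow_one, ← M_add_one]; ring
  rw [h3, h2, h, hiden]
  exact oddPart_shape 1 _ (eval_Q 0 eval_M_zero _ _ he) (eval_Q 1 eval_M_one _ _ he)

lemma collatz_iter (A : Polynomial (ZMod 2)) (a : ℕ) :
    ∀ (t e : ℕ), 1 ≤ e →
    collatz A 1 = 1 + M ^ a * (M+1) ^ (t + e) →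
    collatz A (2*t+1) = 1 + M ^ (a + t) * (M+1) ^ e := by
  intro t
  induction t with
  | zero => intro e he h; simpa using h
  | succ t ih =>
    intro e he h
    have h' : collatz A 1 = 1 + M ^ a * (M+1) ^ (t + (e+1)) := by
      rw [h, show t + 1 + e = t + (e+1) by omega]
    have := collatz_two_step A t (a+t) e he (ih (e+1) (by omega) h')
    rwa [show a + (t+1) = a + t + 1 by omega]

lemma sum_M_eq (r : ℕ) (hr : 1 ≤ r) :
    (∑ i ∈ Finset.range (2 ^ r + 1), M ^ i) = 1 + M * (M+1) ^ (2^r - 1) := by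
  have hM1 : (M + 1 : Polynomial (ZMod 2)) ≠ 0 := M_add_one_ne
  have hsum : (∑ i ∈ Finset.range (2^r), M ^ i) = (M+1) ^ (2^r - 1) := by
    have hgeo : (∑ i ∈ Finset.range (2^r), M ^ i) * (M - 1) = M ^ (2^r) - 1 :=
      geom_sum_mul M (2^r)
    rw [CharTwo.sub_eq_add, CharTwo.sub_eq_add] at hgeo
    have hpow : (M + 1 : Polynomial (ZMod 2)) ^ (2^r) = M ^ (2^r) + 1 := by
      rw [add_pow_char_pow]; simp
    apply mul_right_cancel₀ hM1
    rw [hgeo, ← hpow, ← pow_succ]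
    congr 1
    have : 1 ≤ 2^r := Nat.one_le_two_pow
    omega
  rw [Finset.sum_range_succ']
  simp only [pow_succ]
  rw [← Finset.sum_mul, hsum, pow_zero]
  ring

lemma A_eq (r u : ℕ) (hr : 1 ≤ r) (A : Polynomial (ZMod 2))
    (hA : A = (∑ i ∈ Finset.range (2 ^ r + 1), M ^ i) ^ 2 ^ u) :
    A = 1 + M ^ (2^u) * (M+1) ^ (2^u * (2^r - 1)) := by
  rw [hA, sum_M_eq r hr, add_pow_char_pow, one_pow, mul_pow, ← pow_mul,
    Nat.mul_comm (2^r - 1) (2^u)]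

theorem length_geom_sum_pow_two_powered' (r u : ℕ) (hr : 1 ≤ r) (hu : 1 ≤ u)
    (A : Polynomial (ZMod 2))
    (hA : A = (∑ i ∈ Finset.range (2 ^ r + 1), M ^ i) ^ 2 ^ u) :
    (sInf {m : ℕ | collatz A (2 * m + 1) = 1} + 1) = 2 ^ u * (2 ^ r - 1) + 1 := by
  have h2r : 2 ≤ 2^r := by
    calc 2 = 2^1 := (pow_one 2).symm
    _ ≤ 2^r := Nat.pow_le_pow_right (by norm_num) hr
  have hN1 : 1 ≤ 2^u := Nat.one_le_two_pow
  set N := 2^u with hN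
  set m := N * (2^r - 1) with hm
  have hm1 : 1 ≤ m := Nat.one_le_iff_ne_zero.2 (Nat.mul_ne_zero (by omega) (by omega))
  obtain ⟨t, ht⟩ : ∃ t, m = t + 1 := ⟨m - 1, by omega⟩
  have hNm : N + m = 2 ^ (u + r) := by
    have h1 : N * 2^r = N * (2^r - 1) + N := by
      calc N * 2^r = N * ((2^r - 1) + 1) := by rw [Nat.sub_add_cancel (by omega)]
        _ = N * (2^r - 1) + N := Nat.mul_succ ..
    have hpa : 2 ^ (u+r) = N * 2^r := by rw [hN, pow_add]
    omega
  have hAeq : A = 1 + M ^ N * (M+1) ^ m := A_eq r u hr A hA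
  have hbase : collatz A 1 = 1 + M ^ N * (M+1) ^ m := by
    have h1 : collatz A 1 = oddPart A := by
      rw [show (1:ℕ) = 0 + 1 from rfl, collatz_succ]; simp [collatz]
    rw [h1, hAeq]
    have := oddPart_shape 0 (1 + M ^ N * (M+1) ^ m)
      (eval_Q 0 eval_M_zero _ _ hm1) (eval_Q 1 eval_M_one _ _ hm1)
    simpa using this
  have hform : ∀ k, k < m → collatz A (2*k+1) = 1 + M ^ (N+k) * (M+1) ^ (m-k) := by
    intro k hk
    exact collatz_iter A N k (m-k) (by omega)
      (by rw [show k + (m - k) = m by omega]; exact hbase)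
  have hne1 : ∀ k, k < m → collatz A (2*k+1) ≠ 1 := by
    intro k hk h
    rw [hform k hk] at h
    have hz : M ^ (N+k) * (M+1) ^ (m-k) = 0 := by
      have := h
      rwa [add_eq_left] at this
    exact mul_ne_zero (pow_ne_zero _ M_ne) (pow_ne_zero _ M_add_one_ne) hz
  have hfin : collatz A (2*m+1) = 1 := by
    have hlast : collatz A (2*t+1) = 1 + M ^ (N+t) * (M+1) ^ 1 := by
      have := hform t (by omega)
      rwa [show m - t = 1 by omega] at this
    have h2 : collatz A (2*t+2) = 1 + M * collatz A (2*t+1) := by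
      rw [show 2*t+2 = (2*t+1)+1 from rfl, collatz_succ,
        if_neg (by omega : ¬ (2*t+1) % 2 = 0)]
    have h3 : collatz A (2*m+1) = oddPart (collatz A (2*t+2)) := by
      rw [show 2*m+1 = (2*t+2)+1 by omega, collatz_succ,
        if_pos (by omega : (2*t+2) % 2 = 0)]
    have hiden : 1 + M * (1 + M ^ (N+t) * (M+1)^1) = (X*(X+1))^(N+m+1) * 1 := by
      rw [mul_one, ← M_add_one]
      have hp : (M + 1 : Polynomial (ZMod 2)) ^ (N+m) = M ^ (N+m) + 1 := by
        rw [hNm, add_pow_char_pow]; simp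
      calc 1 + M * (1 + M ^ (N+t) * (M+1)^1)
          = (M+1) * (1 + M ^ (N+t+1)) := by ring
        _ = (M+1) * (M ^ (N+m) + 1) := by rw [show N+t+1 = N+m by omega]; ring
        _ = (M+1) * (M+1) ^ (N+m) := by rw [hp]
        _ = (M+1) ^ (N+m+1) := by ring
    rw [h3, h2, hlast, hiden]
    exact oddPart_shape (N+m+1) 1 (by simp) (by simp)
  have hinf : sInf {k : ℕ | collatz A (2 * k + 1) = 1} = m := by
    apply le_antisymm
    · exact Nat.sInf_le hfin
    · exact le_csInf ⟨m, hfin⟩ fun b hb => not_lt.1 fun hbm => hne1 b hbm hb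
  rw [hinf]

theorem length_geom_sum_pow_two_powered (r u : ℕ) (hr : 1 ≤ r) (hu : 1 ≤ u)
    (A : Polynomial (ZMod 2))
    (hA : A = (∑ i ∈ Finset.range (2 ^ r + 1), M ^ i) ^ 2 ^ u) :
    collatzLength A = 2 ^ u * (2 ^ r - 1) + 1 :=
  length_geom_sum_pow_two_powered' r u hr hu A hA
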